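/- Let γ_1, …, γ_n ∈ ℝ^n be linearly independent and s_1, …, s_n ∈ ℝ, and consider the random binomial system h given by h_k(x) = a_k exp(γ_kᵀx + s_k) + b_k, k = 1, …, n, where the a_k and b_k are i.i.d. standard Gaussian random variables. Let B := {x ∈ ℝ^n : γ_kᵀx + s_k ≤ 0 for all k}. Then E_h #Z_r(h, B) = 4^{-n}. -/

import Mathlib

open MeasureTheory ProbabilityTheory

/-- The random binomial system `h_k(x) = a_k exp(γ_kᵀ x + s_k) + b_k`. -/
noncomputable def binomialSystem {n : ℕ} (γ : Fin n → Fin n → ℝ) (s : Fin n → ℝ)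
    (ab : (Fin n → ℝ) × (Fin n → ℝ)) (x : Fin n → ℝ) : Fin n → ℝ :=
  fun k => ab.1 k * Real.exp ((∑ i, γ k i * x i) + s k) + ab.2 k

/-! ### ENNReal arithmetic helpers -/

private lemma e8 : (8:ENNReal)⁻¹ = 2⁻¹ * 4⁻¹ := by
  rw [← ENNReal.mul_inv (by norm_num) (by norm_num)]; norm_num
private lemma e1 : (2:ENNReal)⁻¹ * 2⁻¹ = 4⁻¹ := by
  rw [← ENNReal.mul_inv (by norm_num) (by norm_num)]; norm_num
private lemma e2 : (8:ENNReal)⁻¹ + 8⁻¹ = 4⁻¹ := by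
  rw [e8, ← add_mul, ENNReal.inv_two_add_inv_two, one_mul]
private lemma e3 : (2:ENNReal) * 8⁻¹ = 4⁻¹ := by
  rw [e8, ← mul_assoc, ENNReal.mul_inv_cancel (by norm_num) (by norm_num), one_mul]

/-! ### One-dimensional standard Gaussian facts -/

noncomputable abbrev gg : Measure ℝ := gaussianReal 0 1

lemma gg_map_neg : gg.map (fun x => -x) = gg := by
  have h := gaussianReal_map_const_mul (μ := 0) (v := 1) (-1)
  have h2 : (fun x : ℝ => -1 * x) = (fun x : ℝ => -x) := by funext x; ring
  rw [h2] at h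
  rw [gg, h]
  congr 1
  · ring
  · ext; norm_num

lemma gg_singleton (x : ℝ) : gg {x} = 0 := by
  rw [gg, gaussianReal_of_var_ne_zero _ one_ne_zero,
    withDensity_apply _ (measurableSet_singleton x)]
  rw [setLIntegral_measure_zero _ _ (by simp)]

lemma gg_pos_half : gg {x : ℝ | 0 < x} = 2⁻¹ := by
  have hmp : MeasurableSet {x : ℝ | 0 < x} := measurableSet_lt measurable_const measurable_id
  have hmn : MeasurableSet {x : ℝ | x < 0} := measurableSet_lt measurable_id measurable_const
  have hneg : gg {x : ℝ | x < 0} = gg {x : ℝ | 0 < x} := by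
    conv_lhs => rw [← gg_map_neg]
    rw [Measure.map_apply measurable_neg hmn]
    congr 1
    ext x; simp
  have huniv : gg {x : ℝ | x < 0} + gg {x : ℝ | 0 < x} = 1 := by
    rw [← measure_union (by intro t ht1 ht2 x hx; have := ht1 hx; have := ht2 hx
                            simp at *; linarith) hmp]
    have : {x : ℝ | x < 0} ∪ {x : ℝ | 0 < x} = {(0:ℝ)}ᶜ := by
      ext x
      simp only [Set.mem_union, Set.mem_setOf_eq, Set.mem_compl_iff, Set.mem_singleton_iff]
      constructor
      · rintro (h|h) rfl <;> linarith
      · intro h; rcases lt_trichotomy x 0 with h'|h'|h' <;> [left;exact absurd h' h;right] <;>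
          assumption
    rw [this, measure_compl (measurableSet_singleton 0) (measure_ne_top _ _), gg_singleton]
    simp
  rw [hneg] at huniv
  have h2 : (2 : ENNReal) * gg {x : ℝ | 0 < x} = 2 * 2⁻¹ := by
    rw [two_mul, huniv, ENNReal.mul_inv_cancel (by norm_num) (by norm_num)]
  exact (ENNReal.mul_right_inj (by norm_num) (by norm_num)).mp h2

lemma gg_neg_half : gg {x : ℝ | x < 0} = 2⁻¹ := by
  have hmn : MeasurableSet {x : ℝ | x < 0} := measurableSet_lt measurable_id measurable_const
  conv_lhs => rw [← gg_map_neg]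
  rw [Measure.map_apply measurable_neg hmn]
  have : (fun x : ℝ => -x) ⁻¹' {x : ℝ | x < 0} = {x : ℝ | 0 < x} := by ext x; simp
  rw [this, gg_pos_half]

/-! ### The two-dimensional quarter-probability set -/

noncomputable abbrev nu : Measure (ℝ × ℝ) := gg.prod gg

def Cset : Set (ℝ × ℝ) := {p | 0 < -p.2 / p.1 ∧ -p.2 / p.1 ≤ 1}
def Cpos : Set (ℝ × ℝ) := {p | 0 < p.1 ∧ p.2 < 0 ∧ -p.2 ≤ p.1}
def Cneg : Set (ℝ × ℝ) := {p | p.1 < 0 ∧ 0 < p.2 ∧ p.2 ≤ -p.1}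

lemma measurable_Cset : MeasurableSet Cset := by
  apply MeasurableSet.inter
  · exact measurableSet_lt measurable_const (measurable_snd.neg.div measurable_fst)
  · exact measurableSet_le (measurable_snd.neg.div measurable_fst) measurable_const

lemma measurable_Cpos : MeasurableSet Cpos := by
  apply MeasurableSet.inter (measurableSet_lt measurable_const measurable_fst)
  exact MeasurableSet.inter (measurableSet_lt measurable_snd measurable_const)
    (measurableSet_le measurable_snd.neg measurable_fst)

lemma measurable_Cneg : MeasurableSet Cneg := by
  apply MeasurableSet.inter (measurableSet_lt measurable_fst measurable_const)
  exact MeasurableSet.inter (measurableSet_lt measurable_const measurable_snd)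
    (measurableSet_le measurable_snd measurable_fst.neg)

lemma nu_T : MeasurePreserving (fun p : ℝ × ℝ => (-p.2, -p.1)) nu nu := by
  have h1 : MeasurePreserving (Prod.swap : ℝ × ℝ → ℝ × ℝ) nu nu :=
    Measure.measurePreserving_swap
  have hneg : MeasurePreserving (fun x : ℝ => -x) gg gg := ⟨measurable_neg, gg_map_neg⟩
  have h2 : MeasurePreserving (Prod.map (fun x : ℝ => -x) (fun x : ℝ => -x)) nu nu :=
    hneg.prod hneg
  exact h2.comp h1

lemma nu_N : MeasurePreserving (fun p : ℝ × ℝ => (-p.1, -p.2)) nu nu := by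
  have hneg : MeasurePreserving (fun x : ℝ => -x) gg gg := ⟨measurable_neg, gg_map_neg⟩
  exact hneg.prod hneg

lemma nu_diag : nu {p : ℝ × ℝ | p.1 = -p.2} = 0 := by
  have hm : MeasurableSet {p : ℝ × ℝ | p.1 = -p.2} :=
    measurableSet_eq_fun measurable_fst measurable_snd.neg
  rw [Measure.prod_apply hm]
  have : ∀ a : ℝ, (Prod.mk a ⁻¹' {p : ℝ × ℝ | p.1 = -p.2}) = {-a} := by
    intro a; ext b
    simp only [Set.mem_preimage, Set.mem_setOf_eq, Set.mem_singleton_iff]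
    constructor <;> intro h <;> linarith
  simp_rw [this, gg_singleton]
  simp

lemma nu_Cpos : nu Cpos = 8⁻¹ := by
  have key : nu Cpos + nu Cpos = 4⁻¹ := by
    have hT := nu_T
    have hpre : (fun p : ℝ × ℝ => (-p.2, -p.1)) ⁻¹' Cpos
        = {p : ℝ × ℝ | 0 < p.1 ∧ p.2 < 0 ∧ p.1 ≤ -p.2} := by
      ext p; simp only [Set.mem_preimage, Cpos, Set.mem_setOf_eq]
      constructor
      · rintro ⟨h1, h2, h3⟩; refine ⟨by linarith, by linarith, by linarith⟩
      · rintro ⟨h1, h2, h3⟩; refine ⟨by linarith, by linarith, by linarith⟩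
    have h2 : nu Cpos = nu {p : ℝ × ℝ | 0 < p.1 ∧ p.2 < 0 ∧ p.1 ≤ -p.2} := by
      rw [← hpre, hT.measure_preimage measurable_Cpos.nullMeasurableSet]
    nth_rewrite 2 [h2]
    have hm2 : MeasurableSet {p : ℝ × ℝ | 0 < p.1 ∧ p.2 < 0 ∧ p.1 ≤ -p.2} := by
      apply MeasurableSet.inter (measurableSet_lt measurable_const measurable_fst)
      exact MeasurableSet.inter (measurableSet_lt measurable_snd measurable_const)
        (measurableSet_le measurable_fst measurable_snd.neg)
    rw [← measure_union_add_inter _ hm2]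
    have hU : Cpos ∪ {p : ℝ × ℝ | 0 < p.1 ∧ p.2 < 0 ∧ p.1 ≤ -p.2}
        = {x : ℝ | 0 < x} ×ˢ {y : ℝ | y < 0} := by
      ext p; simp only [Set.mem_union, Cpos, Set.mem_setOf_eq, Set.mem_prod]
      constructor
      · rintro (⟨h1,h2,h3⟩|⟨h1,h2,h3⟩) <;> exact ⟨h1, h2⟩
      · rintro ⟨h1, h2⟩
        rcases le_total (-p.2) p.1 with h|h
        · exact Or.inl ⟨h1, h2, h⟩
        · exact Or.inr ⟨h1, h2, h⟩
    have hI : nu (Cpos ∩ {p : ℝ × ℝ | 0 < p.1 ∧ p.2 < 0 ∧ p.1 ≤ -p.2}) = 0 := by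
      refine measure_mono_null ?_ nu_diag
      rintro p ⟨⟨_, _, h3⟩, ⟨_, _, h6⟩⟩
      exact le_antisymm h6 h3
    rw [hU, hI, add_zero, Measure.prod_prod, gg_pos_half, gg_neg_half, e1]
  have h2 : (2 : ENNReal) * nu Cpos = 2 * 8⁻¹ := by
    rw [two_mul, key, e3]
  exact (ENNReal.mul_right_inj (by norm_num) (by norm_num)).mp h2

lemma nu_Cneg : nu Cneg = 8⁻¹ := by
  have hpre : (fun p : ℝ × ℝ => (-p.1, -p.2)) ⁻¹' Cneg = Cpos := by
    ext p; simp only [Set.mem_preimage, Cneg, Cpos, Set.mem_setOf_eq]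
    constructor
    · rintro ⟨h1, h2, h3⟩; exact ⟨by linarith, by linarith, by linarith⟩
    · rintro ⟨h1, h2, h3⟩; exact ⟨by linarith, by linarith, by linarith⟩
  rw [← nu_N.measure_preimage measurable_Cneg.nullMeasurableSet, hpre, nu_Cpos]

lemma Cset_eq : Cset = Cpos ∪ Cneg := by
  ext p
  simp only [Cset, Cpos, Cneg, Set.mem_setOf_eq, Set.mem_union]
  rcases lt_trichotomy p.1 0 with h|h|h
  · constructor
    · rintro ⟨h1, h2⟩
      have hs : 0 < p.2 := by
        by_contra hc; push_neg at hc
        have : -p.2 / p.1 ≤ 0 := div_nonpos_of_nonneg_of_nonpos (by linarith) h.le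
        linarith
      refine Or.inr ⟨h, hs, ?_⟩
      have := (div_le_one_of_neg h).mp h2
      linarith
    · rintro (⟨h1,_,_⟩|⟨h1, h2, h3⟩)
      · exact absurd h (asymm h1)
      constructor
      · apply div_pos_of_neg_of_neg (by linarith) h
      · exact (div_le_one_of_neg h).mpr (by linarith)
  · constructor
    · rintro ⟨h1, _⟩; rw [h] at h1; simp at h1
    · rintro (⟨h1,_⟩|⟨h1,_⟩) <;> rw [h] at h1 <;> exact absurd h1 (lt_irrefl 0)
  · constructor
    · rintro ⟨h1, h2⟩
      have hs : p.2 < 0 := by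
        by_contra hc; push_neg at hc
        have : -p.2 / p.1 ≤ 0 := div_nonpos_of_nonpos_of_nonneg (by linarith) h.le
        linarith
      refine Or.inl ⟨h, hs, ?_⟩
      have := (div_le_one h).mp h2
      linarith
    · rintro (⟨h1, h2, h3⟩|⟨h1,_,_⟩)
      · exact ⟨div_pos (by linarith) h, (div_le_one h).mpr (by linarith)⟩
      · exact absurd h (asymm h1)

lemma nu_Cset : nu Cset = 4⁻¹ := by
  rw [Cset_eq, measure_union _ measurable_Cneg, nu_Cpos, nu_Cneg, e2]
  rintro t ht1 ht2 p hp
  have h1 := ht1 hp; have h2 := ht2 hp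
  simp only [Cpos, Cneg, Set.mem_setOf_eq] at h1 h2
  exact absurd h2.1 (asymm h1.1)

/-! ### Derivative of the binomial system and characterization of its regular zeros -/

section
variable {n : ℕ} (γ : Fin n → Fin n → ℝ) (s : Fin n → ℝ)

noncomputable def Dmat (ab : (Fin n → ℝ) × (Fin n → ℝ)) (x : Fin n → ℝ) :
    Matrix (Fin n) (Fin n) ℝ :=
  Matrix.of fun k i => (ab.1 k * Real.exp ((∑ j, γ k j * x j) + s k)) * γ k i

lemma hasFDerivAt_binomialSystem (ab : (Fin n → ℝ) × (Fin n → ℝ)) (x : Fin n → ℝ) :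
    HasFDerivAt (binomialSystem γ s ab)
      (LinearMap.toContinuousLinearMap (Dmat γ s ab x).mulVecLin) x := by
  apply hasFDerivAt_pi''
  intro k
  have hl : HasFDerivAt (fun x : Fin n → ℝ => (∑ i, γ k i * x i) + s k)
      ((∑ i, γ k i • ContinuousLinearMap.proj (R := ℝ) (φ := fun _ : Fin n => ℝ) i)) x := by
    apply HasFDerivAt.add_const
    exact HasFDerivAt.fun_sum fun i _ => (hasFDerivAt_apply i x).const_mul (γ k i)
  have hexp := (Real.hasDerivAt_exp ((∑ i, γ k i * x i) + s k)).comp_hasFDerivAt x hl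
  have hfull := (hexp.const_mul (ab.1 k)).add_const (ab.2 k)
  have heq : (ab.1 k) • (Real.exp ((∑ i, γ k i * x i) + s k) •
        (∑ i, γ k i • ContinuousLinearMap.proj (R := ℝ) (φ := fun _ : Fin n => ℝ) i))
      = (ContinuousLinearMap.proj k).comp
          (LinearMap.toContinuousLinearMap (Dmat γ s ab x).mulVecLin) := by
    ext v
    simp only [ContinuousLinearMap.smul_apply, ContinuousLinearMap.coe_comp', Function.comp_apply,
      ContinuousLinearMap.proj_apply, LinearMap.coe_toContinuousLinearMap',
      Matrix.mulVecLin_apply, ContinuousLinearMap.coe_sum', Finset.sum_apply,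
      ContinuousLinearMap.coe_smul', Pi.smul_apply, smul_eq_mul]
    simp only [Matrix.mulVec, dotProduct, Dmat, Matrix.of_apply]
    rw [Finset.mul_sum, Finset.mul_sum]
    exact Finset.sum_congr rfl fun i _ => by ring
  rw [← heq]
  exact hfull

noncomputable def xsol (ab : (Fin n → ℝ) × (Fin n → ℝ)) : Fin n → ℝ :=
  (Matrix.of γ)⁻¹.mulVec (fun k => Real.log (-ab.2 k / ab.1 k) - s k)

set_option maxHeartbeats 1000000 in
lemma mem_S_iff (hγ : LinearIndependent ℝ γ) (ab : (Fin n → ℝ) × (Fin n → ℝ))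
    (x : Fin n → ℝ) :
    ((∀ k, (∑ i, γ k i * x i) + s k ≤ 0) ∧ binomialSystem γ s ab x = 0 ∧
      Function.Bijective (fderiv ℝ (binomialSystem γ s ab) x))
    ↔ ((∀ k, 0 < -ab.2 k / ab.1 k ∧ -ab.2 k / ab.1 k ≤ 1) ∧ x = xsol γ s ab) := by
  have hM : IsUnit (Matrix.of γ) := by
    rw [← Matrix.linearIndependent_rows_iff_isUnit]
    exact hγ
  have hdet : IsUnit (Matrix.of γ).det := (Matrix.isUnit_iff_isUnit_det _).mp hM
  have hfd : fderiv ℝ (binomialSystem γ s ab) x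
      = LinearMap.toContinuousLinearMap (Dmat γ s ab x).mulVecLin :=
    (hasFDerivAt_binomialSystem γ s ab x).fderiv
  have hcoe : ⇑(LinearMap.toContinuousLinearMap (Dmat γ s ab x).mulVecLin)
      = (Dmat γ s ab x).mulVec := by
    ext v
    simp [Matrix.mulVecLin_apply]
  constructor
  · rintro ⟨hB, hz, hbij⟩
    have hz' : ∀ k, ab.1 k * Real.exp ((∑ i, γ k i * x i) + s k) = -ab.2 k := by
      intro k
      have := congrFun hz k
      simp only [binomialSystem, Pi.zero_apply] at this
      linarith
    have ha : ∀ k, ab.1 k ≠ 0 := by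
      intro k hk
      rw [hfd, hcoe] at hbij
      obtain ⟨v, hv⟩ := hbij.2 (fun _ => 1)
      have h1 : (Dmat γ s ab x).mulVec v k = 1 := congrFun hv k
      have h0 : (Dmat γ s ab x).mulVec v k = 0 := by
        simp [Matrix.mulVec, dotProduct, Dmat, hk]
      rw [h0] at h1
      exact zero_ne_one h1
    have hexp : ∀ k, Real.exp ((∑ i, γ k i * x i) + s k) = -ab.2 k / ab.1 k := by
      intro k
      rw [eq_div_iff (ha k), mul_comm]
      exact hz' k
    constructor
    · intro k
      refine ⟨?_, ?_⟩
      · rw [← hexp k]; exact Real.exp_pos _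
      · rw [← hexp k]
        exact Real.exp_le_one_iff.mpr (hB k)
    · have hMx : (Matrix.of γ).mulVec x = fun k => Real.log (-ab.2 k / ab.1 k) - s k := by
        funext k
        have : Real.log (-ab.2 k / ab.1 k) = (∑ i, γ k i * x i) + s k := by
          rw [← hexp k, Real.log_exp]
        rw [this]
        simp [Matrix.mulVec, dotProduct]
      rw [xsol, ← hMx, Matrix.mulVec_mulVec, Matrix.nonsing_inv_mul _ hdet, Matrix.one_mulVec]
  · rintro ⟨hE, rfl⟩
    have hMx : (Matrix.of γ).mulVec (xsol γ s ab)
        = fun k => Real.log (-ab.2 k / ab.1 k) - s k := by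
      rw [xsol, Matrix.mulVec_mulVec, Matrix.mul_nonsing_inv _ hdet, Matrix.one_mulVec]
    have hu : ∀ k, (∑ i, γ k i * xsol γ s ab i) + s k = Real.log (-ab.2 k / ab.1 k) := by
      intro k
      have := congrFun hMx k
      simp only [Matrix.mulVec, dotProduct, Matrix.of_apply] at this
      linarith [this]
    have ha : ∀ k, ab.1 k ≠ 0 := by
      intro k hk
      have := (hE k).1
      rw [hk, div_zero] at this
      exact lt_irrefl 0 this
    have hb : ∀ k, ab.2 k ≠ 0 := by
      intro k hk
      have := (hE k).1
      rw [hk, neg_zero, zero_div] at this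
      exact lt_irrefl 0 this
    refine ⟨?_, ?_, ?_⟩
    · intro k
      rw [hu k]
      exact Real.log_nonpos (le_of_lt (hE k).1) (hE k).2
    · funext k
      simp only [binomialSystem, Pi.zero_apply]
      rw [hu k, Real.exp_log (hE k).1]
      rw [mul_div_assoc', mul_comm]
      have : -(ab.2 k) * ab.1 k / ab.1 k = -ab.2 k := by
        rw [mul_div_assoc, div_self (ha k), mul_one]
      rw [this]
      ring
    · rw [hfd, hcoe]
      have hDmat : Dmat γ s ab (xsol γ s ab)
          = Matrix.diagonal (fun k => -ab.2 k) * Matrix.of γ := by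
        ext k i
        rw [Matrix.diagonal_mul]
        simp only [Dmat, Matrix.of_apply]
        rw [hu k, Real.exp_log (hE k).1, mul_comm (ab.1 k), div_mul_cancel₀ _ (ha k)]
      have hunit : IsUnit (Dmat γ s ab (xsol γ s ab)) := by
        rw [hDmat]
        refine IsUnit.mul ?_ hM
        rw [Matrix.isUnit_iff_isUnit_det, Matrix.det_diagonal]
        rw [isUnit_iff_ne_zero, Finset.prod_ne_zero_iff]
        intro k _
        simpa using hb k
      exact ⟨Matrix.mulVec_injective_iff_isUnit.mpr hunit,
        Matrix.mulVec_surjective_iff_isUnit.mpr hunit⟩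

end

/-! ### Main theorem -/

theorem expected_regular_zeros_binomial_eq
    (n : ℕ) (γ : Fin n → Fin n → ℝ) (hγ : LinearIndependent ℝ γ) (s : Fin n → ℝ)
    (B : Set (Fin n → ℝ)) (hB : B = {x | ∀ k, (∑ i, γ k i * x i) + s k ≤ 0}) :
    ∫⁻ ab, (({x | x ∈ B ∧ binomialSystem γ s ab x = 0 ∧
          Function.Bijective (fderiv ℝ (binomialSystem γ s ab) x)}).encard : ENNReal)
        ∂((Measure.pi fun _ : Fin n => gaussianReal 0 1).prod
            (Measure.pi fun _ : Fin n => gaussianReal 0 1))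
      = ((4 : ENNReal) ^ n)⁻¹ := by
  subst hB
  set E : Set ((Fin n → ℝ) × (Fin n → ℝ)) :=
    {ab | ∀ k, 0 < -ab.2 k / ab.1 k ∧ -ab.2 k / ab.1 k ≤ 1} with hEdef
  have hEmeas : MeasurableSet E := by
    have : E = ⋂ k, (fun ab : (Fin n → ℝ) × (Fin n → ℝ) => -ab.2 k / ab.1 k) ⁻¹'
        (Set.Ioc (0:ℝ) 1) := by
      ext ab
      simp [hEdef, Set.mem_iInter, Set.mem_Ioc]
    rw [this]
    refine MeasurableSet.iInter fun k => ?_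
    exact (((measurable_pi_apply k).comp measurable_snd).neg.div
      ((measurable_pi_apply k).comp measurable_fst)) measurableSet_Ioc
  have hpoint : ∀ ab, (({x | x ∈ {x | ∀ k, (∑ i, γ k i * x i) + s k ≤ 0} ∧
        binomialSystem γ s ab x = 0 ∧
        Function.Bijective (fderiv ℝ (binomialSystem γ s ab) x)}).encard : ENNReal)
      = E.indicator 1 ab := by
    intro ab
    by_cases h : ab ∈ E
    · have hset : {x | x ∈ {x | ∀ k, (∑ i, γ k i * x i) + s k ≤ 0} ∧
          binomialSystem γ s ab x = 0 ∧
          Function.Bijective (fderiv ℝ (binomialSystem γ s ab) x)} = {xsol γ s ab} := by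
        ext x
        rw [Set.mem_singleton_iff]
        constructor
        · intro hx
          exact ((mem_S_iff γ s hγ ab x).mp ⟨hx.1, hx.2.1, hx.2.2⟩).2
        · intro hx
          have := (mem_S_iff γ s hγ ab x).mpr ⟨h, hx⟩
          exact ⟨this.1, this.2.1, this.2.2⟩
      rw [hset, Set.indicator_of_mem h, Set.encard_singleton]
      simp
    · have hset : {x | x ∈ {x | ∀ k, (∑ i, γ k i * x i) + s k ≤ 0} ∧
          binomialSystem γ s ab x = 0 ∧
          Function.Bijective (fderiv ℝ (binomialSystem γ s ab) x)} = ∅ := by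
        ext x
        simp only [Set.mem_empty_iff_false, iff_false]
        intro hx
        exact h ((mem_S_iff γ s hγ ab x).mp ⟨hx.1, hx.2.1, hx.2.2⟩).1
      rw [hset, Set.indicator_of_notMem h, Set.encard_empty]
      simp
  rw [lintegral_congr hpoint, lintegral_indicator_one hEmeas]
  -- now compute the measure of E
  have hmp := measurePreserving_arrowProdEquivProdArrow ℝ ℝ (Fin n)
    (fun _ => gaussianReal 0 1) (fun _ => gaussianReal 0 1)
  have hpre : (MeasurableEquiv.arrowProdEquivProdArrow ℝ ℝ (Fin n)) ⁻¹' E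
      = Set.pi Set.univ (fun _ : Fin n => Cset) := by
    ext f
    simp only [Set.mem_preimage, MeasurableEquiv.arrowProdEquivProdArrow,
      Equiv.arrowProdEquivProdArrow, MeasurableEquiv.coe_mk, Equiv.coe_fn_mk,
      hEdef, Set.mem_setOf_eq, Set.mem_pi, Set.mem_univ, forall_true_left, Cset, true_implies]
  have := hmp.measure_preimage hEmeas.nullMeasurableSet
  rw [← this, hpre, Measure.pi_pi]
  rw [Finset.prod_congr rfl (fun k _ => (nu_Cset : _))]
  rw [Finset.prod_const, ENNReal.inv_pow, Finset.card_univ, Fintype.card_fin]
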